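/- arXiv:2409.06277 — 3 statements merged into one kernel-verified Lean document; each statement's English description precedes it below -/
import Mathlib

section
/- Let V = [v₁ … v_K] ∈ ℝ^{d×K} where each entry is sampled i.i.d. from the standard normal distribution truncated to [-1/√d, 1/√d], and let ρ = 1 - (2ψ(1/√d)/√d)/(2Φ(1/√d) - 1) denote the variance of each entry. Then for any fixed Δ ∈ ℝ^d, the reconstruction Δ̃ = (ρK)^{-1} V Vᵀ Δ is unbiased: E[Δ̃] = Δ. -/
open MeasureTheory ProbabilityTheory Matrix Real Set
open scoped ENNReal NNReal

/-- PDF of the standard normal distribution. -/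
noncomputable def stdNormalPDF (x : ℝ) : ℝ := Real.exp (-x ^ 2 / 2) / Real.sqrt (2 * Real.pi)

/-- CDF of the standard normal distribution. -/
noncomputable def stdNormalCDF (x : ℝ) : ℝ := ∫ t in Set.Iic x, stdNormalPDF t

lemma psi_cont : Continuous stdNormalPDF := by
  unfold stdNormalPDF
  fun_prop

lemma psi_pos (x : ℝ) : 0 < stdNormalPDF x := by
  unfold stdNormalPDF
  positivity

lemma psi_even (x : ℝ) : stdNormalPDF (-x) = stdNormalPDF x := by
  simp [stdNormalPDF]

lemma psi_integrable : Integrable stdNormalPDF := by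
  have h : Integrable (fun x : ℝ => Real.exp (-(1/2) * x ^ 2)) := integrable_exp_neg_mul_sq (by norm_num)
  have := h.div_const (Real.sqrt (2 * Real.pi))
  convert this using 2 with x
  simp [stdNormalPDF]
  ring_nf

lemma psi_total : ∫ x, stdNormalPDF x = 1 := by
  unfold stdNormalPDF
  rw [MeasureTheory.integral_div]
  have : ∫ x : ℝ, Real.exp (-x ^ 2 / 2) = ∫ x : ℝ, Real.exp (-(1/2) * x ^ 2) := by
    congr 1; ext x; ring_nf
  rw [this, integral_gaussian]
  rw [div_eq_one_iff_eq (by positivity)]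
  congr 1
  rw [div_div_eq_mul_div, mul_comm]
  norm_num

lemma cdf_neg (a : ℝ) : stdNormalCDF (-a) = 1 - stdNormalCDF a := by
  have h1 : stdNormalCDF (-a) = ∫ x in Set.Ioi a, stdNormalPDF x := by
    rw [stdNormalCDF]
    have : ∫ t in Set.Iic (-a), stdNormalPDF t = ∫ t in Set.Iic (-a), stdNormalPDF (-t) := by
      simp_rw [psi_even]
    rw [this, integral_comp_neg_Iic (-a) stdNormalPDF, neg_neg]
  have h2 := intervalIntegral.integral_Iic_add_Ioi (b := a) (f := stdNormalPDF) (μ := volume)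
    psi_integrable.integrableOn psi_integrable.integrableOn
  rw [psi_total] at h2
  rw [h1, stdNormalCDF] at *
  linarith

lemma Z_eq (a : ℝ) : 2 * stdNormalCDF a - 1 = ∫ x in (-a)..a, stdNormalPDF x := by
  rw [← intervalIntegral.integral_Iic_sub_Iic psi_integrable.integrableOn psi_integrable.integrableOn]
  rw [show Set.Iic = Set.Iic from rfl]
  have := cdf_neg a
  rw [stdNormalCDF, stdNormalCDF] at *
  linarith

lemma Z_pos {a : ℝ} (ha : 0 < a) : 0 < 2 * stdNormalCDF a - 1 := by
  rw [Z_eq]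
  exact intervalIntegral.intervalIntegral_pos_of_pos
    (psi_cont.intervalIntegrable _ _) psi_pos (by linarith)

lemma hasDerivAt_negexp (x : ℝ) :
    HasDerivAt (fun x : ℝ => -Real.exp (-x ^ 2 / 2)) (x * Real.exp (-x ^ 2 / 2)) x := by
  have h1 : HasDerivAt (fun x : ℝ => -x ^ 2 / 2) (-x) x := by
    have := ((hasDerivAt_pow 2 x).neg.div_const 2)
    exact this.congr_deriv (by norm_num; ring)
  have := (Real.hasDerivAt_exp (-x ^ 2 / 2)).comp x h1
  exact this.neg.congr_deriv (by ring)

lemma J1 (a : ℝ) : ∫ x in (-a)..a, x * Real.exp (-x ^ 2 / 2) = 0 := by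
  rw [intervalIntegral.integral_eq_sub_of_hasDerivAt (fun x _ => hasDerivAt_negexp x)
    ((continuous_id.mul (by fun_prop)).intervalIntegrable _ _)]
  simp [neg_pow]

lemma hasDerivAt_G (x : ℝ) :
    HasDerivAt (fun x : ℝ => -(x * Real.exp (-x ^ 2 / 2)))
      (x ^ 2 * Real.exp (-x ^ 2 / 2) - Real.exp (-x ^ 2 / 2)) x := by
  have h1 : HasDerivAt (fun x : ℝ => -x ^ 2 / 2) (-x) x := by
    have := ((hasDerivAt_pow 2 x).neg.div_const 2)
    exact this.congr_deriv (by norm_num; ring)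
  have h2 := (Real.hasDerivAt_exp (-x ^ 2 / 2)).comp x h1
  have := ((hasDerivAt_id x).mul h2).neg
  exact this.congr_deriv (by
  simp only [Function.comp, id]
  ring)

lemma J2 (a : ℝ) : ∫ x in (-a)..a, x ^ 2 * Real.exp (-x ^ 2 / 2) =
    (∫ x in (-a)..a, Real.exp (-x ^ 2 / 2)) - 2 * a * Real.exp (-a ^ 2 / 2) := by
  have key : ∫ x in (-a)..a, (x ^ 2 * Real.exp (-x ^ 2 / 2) - Real.exp (-x ^ 2 / 2)) =
      -(a * Real.exp (-a ^ 2 / 2)) - -(-a * Real.exp (-(-a) ^ 2 / 2)) := by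
    exact intervalIntegral.integral_eq_sub_of_hasDerivAt (fun x _ => hasDerivAt_G x)
      (((continuous_pow 2).mul (by fun_prop) |>.sub (by fun_prop)).intervalIntegrable _ _)
  rw [intervalIntegral.integral_sub ((by fun_prop : Continuous fun x : ℝ => x ^ 2 * Real.exp (-x ^ 2 / 2)).intervalIntegrable _ _)
    ((by fun_prop : Continuous fun x : ℝ => Real.exp (-x ^ 2 / 2)).intervalIntegrable _ _)] at key
  rw [show -(-a) ^ 2 = -a ^ 2 by ring] at key
  linarith

/-- The standard normal distribution truncated to the interval `[-a, a]`. -/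
noncomputable def truncGaussian (a : ℝ) : Measure ℝ :=
  (ENNReal.ofReal (2 * stdNormalCDF a - 1))⁻¹ •
    ((volume.restrict (Set.Icc (-a) a)).withDensity fun x => ENNReal.ofReal (stdNormalPDF x))

lemma trunc_integrable {a : ℝ} (ha : 0 < a) (g : ℝ → ℝ) (hg : Continuous g) :
    Integrable g (truncGaussian a) := by
  have hZ : 0 < 2 * stdNormalCDF a - 1 := Z_pos ha
  unfold truncGaussian
  refine Integrable.smul_measure ?_
    (ENNReal.inv_ne_top.mpr (ENNReal.ofReal_pos.mpr hZ).ne')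
  rw [integrable_withDensity_iff (by exact psi_cont.measurable.ennreal_ofReal)
    (Filter.Eventually.of_forall fun x => ENNReal.ofReal_lt_top)]
  have : Continuous fun x => g x * stdNormalPDF x := hg.mul psi_cont
  have h2 := this.integrableOn_Icc (a := -a) (b := a) (μ := volume)
  refine h2.congr_fun (fun x _ => ?_) measurableSet_Icc
  rw [ENNReal.toReal_ofReal (psi_pos x).le]

lemma trunc_integral {a : ℝ} (ha : 0 < a) (g : ℝ → ℝ) (hg : Continuous g) :
    ∫ x, g x ∂(truncGaussian a) =
      (2 * stdNormalCDF a - 1)⁻¹ * ∫ x in (-a)..a, stdNormalPDF x * g x := by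
  have hZ : 0 < 2 * stdNormalCDF a - 1 := Z_pos ha
  unfold truncGaussian
  rw [integral_smul_measure]
  have hd : (fun x => ENNReal.ofReal (stdNormalPDF x)) =
      fun x => ((stdNormalPDF x).toNNReal : ℝ≥0∞) := rfl
  rw [hd, integral_withDensity_eq_integral_smul
    (by exact psi_cont.measurable.real_toNNReal) g]
  have he : ∀ x, (stdNormalPDF x).toNNReal • g x = stdNormalPDF x * g x := by
    intro x
    rw [NNReal.smul_def, smul_eq_mul, Real.coe_toNNReal _ (psi_pos x).le]
  simp_rw [he]
  rw [integral_Icc_eq_integral_Ioc, ← intervalIntegral.integral_of_le (by linarith)]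
  congr 1
  rw [ENNReal.toReal_inv, ENNReal.toReal_ofReal hZ.le]

lemma trunc_mean {a : ℝ} (ha : 0 < a) : ∫ x, x ∂(truncGaussian a) = 0 := by
  rw [trunc_integral ha (fun x => x) (by fun_prop)]
  have h : ∫ x in (-a)..a, stdNormalPDF x * x = 0 := by
    have h1 : ∫ x in (-a)..a, stdNormalPDF x * x =
        (∫ x in (-a)..a, x * Real.exp (-x ^ 2 / 2)) * (Real.sqrt (2 * Real.pi))⁻¹ := by
      rw [← intervalIntegral.integral_mul_const]
      apply intervalIntegral.integral_congr
      intro x _; unfold stdNormalPDF; ring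
    rw [h1, J1, zero_mul]
  rw [h, mul_zero]

lemma psi_intconst (a : ℝ) : ∫ x in (-a)..a, stdNormalPDF x =
    (∫ x in (-a)..a, Real.exp (-x ^ 2 / 2)) * (Real.sqrt (2 * Real.pi))⁻¹ := by
  rw [← intervalIntegral.integral_mul_const]
  apply intervalIntegral.integral_congr
  intro x _; unfold stdNormalPDF; ring

lemma I2_eq (a : ℝ) : ∫ x in (-a)..a, stdNormalPDF x * (x * x) =
    (2 * stdNormalCDF a - 1) - 2 * a * stdNormalPDF a := by
  have h1 : ∫ x in (-a)..a, stdNormalPDF x * (x * x) =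
      (∫ x in (-a)..a, x ^ 2 * Real.exp (-x ^ 2 / 2)) * (Real.sqrt (2 * Real.pi))⁻¹ := by
    rw [← intervalIntegral.integral_mul_const]
    apply intervalIntegral.integral_congr
    intro x _; unfold stdNormalPDF; ring
  rw [h1, J2, Z_eq, psi_intconst]
  unfold stdNormalPDF
  ring

lemma I2_pos {a : ℝ} (ha : 0 < a) : 0 < ∫ x in (-a)..a, stdNormalPDF x * (x * x) := by
  have hc : Continuous fun x : ℝ => stdNormalPDF x * (x * x) :=
    psi_cont.mul (continuous_id.mul continuous_id)
  have h1 : 0 < ∫ x in (-a)..(0 : ℝ), stdNormalPDF x * (x * x) :=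
    intervalIntegral.intervalIntegral_pos_of_pos_on (hc.intervalIntegrable (μ := volume) _ _)
      (fun x hx => mul_pos (psi_pos x) (mul_pos_of_neg_of_neg hx.2 hx.2)) (by linarith)
  have h2 : 0 < ∫ x in (0 : ℝ)..a, stdNormalPDF x * (x * x) :=
    intervalIntegral.intervalIntegral_pos_of_pos_on (hc.intervalIntegrable (μ := volume) _ _)
      (fun x hx => mul_pos (psi_pos x) (mul_pos hx.1 hx.1)) ha
  have h3 := intervalIntegral.integral_add_adjacent_intervals
    (hc.intervalIntegrable (μ := volume) (-a) 0) (hc.intervalIntegrable (μ := volume) 0 a)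
  linarith

lemma trunc_m2 {a : ℝ} (ha : 0 < a) : ∫ x, x * x ∂(truncGaussian a) =
    1 - 2 * a * stdNormalPDF a / (2 * stdNormalCDF a - 1) := by
  have hZ := Z_pos ha
  rw [trunc_integral ha (fun x => x * x) (by fun_prop), I2_eq]
  field_simp

lemma trunc_m2_pos {a : ℝ} (ha : 0 < a) : 0 < ∫ x, x * x ∂(truncGaussian a) := by
  rw [trunc_integral ha (fun x => x * x) (by fun_prop)]
  exact mul_pos (inv_pos.mpr (Z_pos ha)) (I2_pos ha)
theorem unbiased_reconstruction (d K : ℕ) (hd : 0 < d) (hK : 0 < K)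
    {Ω : Type*} [MeasurableSpace Ω] (P : Measure Ω) [IsProbabilityMeasure P]
    (V : Ω → Matrix (Fin d) (Fin K) ℝ) (hmeas : ∀ i k, Measurable fun ω => V ω i k)
    (hindep : iIndepFun
      (fun p : Fin d × Fin K => fun ω => V ω p.1 p.2) P)
    (hdist : ∀ p : Fin d × Fin K,
      Measure.map (fun ω => V ω p.1 p.2) P = truncGaussian (1 / Real.sqrt d))
    (ρ : ℝ)
    (hρ : ρ = 1 - (2 * stdNormalPDF (1 / Real.sqrt d) / Real.sqrt d) /
        (2 * stdNormalCDF (1 / Real.sqrt d) - 1))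
    (Δ : Fin d → ℝ) :
    ∀ i, (∫ ω, ((ρ * K)⁻¹ • ((V ω * (V ω)ᵀ).mulVec Δ)) i ∂P) = Δ i := by
  intro i
  set a : ℝ := 1 / Real.sqrt d with ha_def
  have hsd : 0 < Real.sqrt d := Real.sqrt_pos.mpr (by exact_mod_cast hd)
  have ha : 0 < a := by positivity
  have hρ2 : ρ = ∫ x, x * x ∂(truncGaussian a) := by
    rw [trunc_m2 ha, hρ]
    congr 2
    rw [ha_def]
    field_simp
  have hρpos : 0 < ρ := hρ2 ▸ trunc_m2_pos ha
  have hint1 : ∀ p : Fin d × Fin K, Integrable (fun ω => V ω p.1 p.2) P := by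
    intro p
    have h : Integrable (fun x : ℝ => x) (Measure.map (fun ω => V ω p.1 p.2) P) := by
      rw [hdist p]; exact trunc_integrable ha _ (by fun_prop)
    exact (integrable_map_measure aestronglyMeasurable_id
      (hmeas p.1 p.2).aemeasurable).mp h
  have hmean : ∀ p : Fin d × Fin K, ∫ ω, V ω p.1 p.2 ∂P = 0 := by
    intro p
    have h := integral_map (μ := P) (hmeas p.1 p.2).aemeasurable
      (f := fun x : ℝ => x) aestronglyMeasurable_id
    rw [hdist p, trunc_mean ha] at h
    exact h.symm
  have hsq : ∀ p : Fin d × Fin K,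
      Integrable (fun ω => V ω p.1 p.2 * V ω p.1 p.2) P := by
    intro p
    have h : Integrable (fun x : ℝ => x * x) (Measure.map (fun ω => V ω p.1 p.2) P) := by
      rw [hdist p]; exact trunc_integrable ha _ (by fun_prop)
    exact (integrable_map_measure
      (continuous_id.mul continuous_id).aestronglyMeasurable
      (hmeas p.1 p.2).aemeasurable).mp h
  have hm2 : ∀ p : Fin d × Fin K, ∫ ω, V ω p.1 p.2 * V ω p.1 p.2 ∂P = ρ := by
    intro p
    have h := integral_map (μ := P) (hmeas p.1 p.2).aemeasurable
      (f := fun x : ℝ => x * x) (continuous_id.mul continuous_id).aestronglyMeasurable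
    rw [hdist p] at h
    rw [hρ2]
    simpa using h.symm
  have key : ∀ (j : Fin d) (k : Fin K),
      ∫ ω, V ω i k * V ω j k ∂P = if i = j then ρ else 0 := by
    intro j k
    by_cases hij : i = j
    · subst hij
      simpa using hm2 (i, k)
    · rw [if_neg hij]
      have hne : ((i, k) : Fin d × Fin K) ≠ (j, k) := by simp [hij]
      have hind : IndepFun (fun ω => V ω i k) (fun ω => V ω j k) P := hindep.indepFun hne
      have h := hind.integral_mul_eq_mul_integral (hmeas i k).aestronglyMeasurable
        (hmeas j k).aestronglyMeasurable
      have h0 := hmean (i, k)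
      have h1 := hmean (j, k)
      simp only at h0 h1
      simpa [h0, h1] using h
  have hintprod : ∀ (j : Fin d) (k : Fin K),
      Integrable (fun ω => V ω i k * V ω j k) P := by
    intro j k
    by_cases hij : i = j
    · subst hij; simpa using hsq (i, k)
    · have hne : ((i, k) : Fin d × Fin K) ≠ (j, k) := by simp [hij]
      have := (hindep.indepFun hne).integrable_mul (hint1 (i, k)) (hint1 (j, k))
      exact this
  have hpt : ∀ ω, ((ρ * K)⁻¹ • ((V ω * (V ω)ᵀ).mulVec Δ)) i =
      ∑ j, ∑ k, (ρ * K)⁻¹ * (V ω i k * V ω j k * Δ j) := by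
    intro ω
    simp only [Pi.smul_apply, smul_eq_mul, Matrix.mulVec, dotProduct,
      Matrix.mul_apply, Matrix.transpose_apply, Finset.mul_sum, Finset.sum_mul]
  have step : ∫ ω, ((ρ * K)⁻¹ • ((V ω * (V ω)ᵀ).mulVec Δ)) i ∂P =
      ∑ j, ∑ k, (ρ * K)⁻¹ * ((∫ ω, V ω i k * V ω j k ∂P) * Δ j) := by
    simp_rw [hpt]
    rw [integral_finset_sum _ (fun j _ => integrable_finset_sum _
      (fun k _ => (((hintprod j k).mul_const (Δ j)).const_mul _)))]
    refine Finset.sum_congr rfl fun j _ => ?_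
    rw [integral_finset_sum _ (fun k _ => (((hintprod j k).mul_const (Δ j)).const_mul _))]
    refine Finset.sum_congr rfl fun k _ => ?_
    rw [integral_const_mul, integral_mul_const]
  rw [step]
  simp_rw [key]
  simp only [ite_mul, zero_mul, mul_ite, mul_zero, Finset.sum_const, Finset.card_univ,
    Fintype.card_fin, smul_ite, smul_zero, Finset.sum_ite_eq, Finset.mem_univ, if_true,
    nsmul_eq_mul]
  have hKpos : (0 : ℝ) < K := by exact_mod_cast hK
  field_simp
end

section
/- Let v₁, …, v_K ∈ ℝ^d be i.i.d. random vectors with E[v_k v_kᵀ] = ρ I_d for some ρ ∈ (0,1) and ‖v_k‖ ≤ 1 almost surely, and set V = [v₁ … v_K]. Then for any fixed Δ ∈ ℝ^d, E[‖(ρK)^{-1} V Vᵀ Δ - Δ‖] ≤ (√(2 ln(2d)/(ρK)) + ln(2d)/(ρK)) ‖Δ‖. In particular, E[‖Δ̃ - Δ‖] ≤ max{2√(2 ln(2d)/(ρK)), 2 ln(2d)/(ρK)} ‖Δ‖. -/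
open MeasureTheory ProbabilityTheory Matrix

set_option maxHeartbeats 1000000

private lemma coord_abs_le_norm {d : ℕ} (x : EuclideanSpace ℝ (Fin d)) (i : Fin d) :
    |x i| ≤ ‖x‖ := by
  rw [EuclideanSpace.norm_eq, ← Real.sqrt_sq_eq_abs]
  apply Real.sqrt_le_sqrt
  simpa [Real.norm_eq_abs, sq_abs] using
    Finset.single_le_sum (f := fun j => (x j)^2) (fun j _ => sq_nonneg _) (Finset.mem_univ i)

private lemma euclid_norm_sq {d : ℕ} (x : EuclideanSpace ℝ (Fin d)) :
    ‖x‖^2 = ∑ i, (x i)^2 := by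
  rw [EuclideanSpace.norm_eq, Real.sq_sqrt (by positivity)]
  simp [Real.norm_eq_abs, sq_abs]

theorem reconstruction_error_bound (d K : ℕ) (hd : 0 < d) (hK : 0 < K) (ρ : ℝ)
    (hρ0 : 0 < ρ) (hρ1 : ρ < 1)
    {Ω : Type*} [MeasurableSpace Ω] (P : Measure Ω) [IsProbabilityMeasure P]
    (v : Fin K → Ω → EuclideanSpace ℝ (Fin d))
    (hmeas : ∀ k i, Measurable fun ω => v k ω i)
    (hindep : iIndepFun v P)
    (hident : ∀ k l : Fin K, Measure.map (v k) P = Measure.map (v l) P)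
    (hnorm : ∀ k, ∀ᵐ ω ∂P, ‖v k ω‖ ≤ 1)
    (hcov : ∀ k i j, (∫ ω, v k ω i * v k ω j ∂P) = ρ * (1 : Matrix (Fin d) (Fin d) ℝ) i j)
    (V : Ω → Matrix (Fin d) (Fin K) ℝ) (hV : V = fun ω => Matrix.of fun i k => v k ω i)
    (Δ : EuclideanSpace ℝ (Fin d)) :
    (∫ ω, ‖Matrix.toEuclideanCLM (𝕜 := ℝ) ((ρ * K)⁻¹ • (V ω * (V ω)ᵀ)) Δ - Δ‖ ∂P) ≤
        (Real.sqrt (2 * Real.log (2 * d) / (ρ * K)) + Real.log (2 * d) / (ρ * K)) * ‖Δ‖ ∧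
      (∫ ω, ‖Matrix.toEuclideanCLM (𝕜 := ℝ) ((ρ * K)⁻¹ • (V ω * (V ω)ᵀ)) Δ - Δ‖ ∂P) ≤
        max (2 * Real.sqrt (2 * Real.log (2 * d) / (ρ * K)))
          (2 * Real.log (2 * d) / (ρ * K)) * ‖Δ‖ := by
  have hKR : (0:ℝ) < K := by exact_mod_cast hK
  have hρK : (0:ℝ) < ρ * K := mul_pos hρ0 hKR
  set c : ℝ := (ρ * K)⁻¹ with hcdef
  have hc0 : 0 < c := inv_pos.2 hρK
  have hc1 : c * (ρ * K) = 1 := inv_mul_cancel₀ hρK.ne'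
  set s : Fin K → Ω → ℝ := fun k ω => ∑ j, v k ω j * Δ j with hsdef
  set B : ℝ := ∑ j, |Δ j| with hBdef
  have hB0 : 0 ≤ B := Finset.sum_nonneg fun j _ => abs_nonneg _
  set w : Ω → Fin d → ℝ := fun ω i => c * (∑ k, s k ω * v k ω i) - Δ i with hwdef
  -- coordinates of the random vector
  have hcoord : ∀ ω (i : Fin d),
      (Matrix.toEuclideanCLM (𝕜 := ℝ) ((ρ * K)⁻¹ • (V ω * (V ω)ᵀ)) Δ - Δ) i = w ω i := by
    intro ω i
    have h : (Matrix.toEuclideanCLM (𝕜 := ℝ) ((ρ * K)⁻¹ • (V ω * (V ω)ᵀ)) Δ) i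
        = (((ρ * K)⁻¹ • (V ω * (V ω)ᵀ)) *ᵥ (fun j => Δ j)) i := rfl
    rw [PiLp.sub_apply, h]
    simp only [hwdef, hsdef, hV, mulVec, dotProduct, Matrix.smul_apply, Matrix.mul_apply,
      Matrix.transpose_apply, Matrix.of_apply, smul_eq_mul, Finset.sum_mul, Finset.mul_sum,
      hcdef]
    rw [Finset.sum_comm]
    congr 1
    exact Finset.sum_congr rfl fun k _ => Finset.sum_congr rfl fun j _ => by ring
  set F : Ω → ℝ :=
    fun ω => ‖Matrix.toEuclideanCLM (𝕜 := ℝ) ((ρ * K)⁻¹ • (V ω * (V ω)ᵀ)) Δ - Δ‖ with hFdef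
  have hFnorm : ∀ ω, F ω = Real.sqrt (∑ i, (w ω i)^2) := by
    intro ω
    rw [hFdef]
    dsimp only
    rw [EuclideanSpace.norm_eq]
    congr 1
    refine Finset.sum_congr rfl fun i _ => ?_
    rw [hcoord ω i, Real.norm_eq_abs, sq_abs]
  -- measurability
  have hms : ∀ k, Measurable (s k) :=
    fun k => Finset.measurable_sum _ fun j _ => (hmeas k j).mul_const _
  have hmw : ∀ i, Measurable (fun ω => w ω i) := by
    intro i
    apply Measurable.sub _ measurable_const
    exact (Finset.measurable_sum _ fun k _ => (hms k).mul (hmeas k i)).const_mul _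
  -- integrability helper
  have hIb : ∀ (g : Ω → ℝ), Measurable g → ∀ (C : ℝ), (∀ᵐ ω ∂P, |g ω| ≤ C) → Integrable g P :=
    fun g hg C h => (integrable_const C).mono' hg.aestronglyMeasurable (by simpa using h)
  -- a.e. bounds
  have hb : ∀ k, ∀ᵐ ω ∂P, (∀ i, |v k ω i| ≤ 1) ∧ |s k ω| ≤ B := by
    intro k
    filter_upwards [hnorm k] with ω hω
    have h1 : ∀ i, |v k ω i| ≤ 1 := fun i => (coord_abs_le_norm _ i).trans hω
    refine ⟨h1, ?_⟩
    calc |s k ω| ≤ ∑ j, |v k ω j * Δ j| := Finset.abs_sum_le_sum_abs _ _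
      _ ≤ ∑ j, |Δ j| := Finset.sum_le_sum fun j _ => by
          rw [abs_mul]
          nlinarith [h1 j, abs_nonneg (Δ j), abs_nonneg (v k ω j)]
  have hI1 : ∀ k i j, Integrable (fun ω => v k ω i * v k ω j) P := by
    intro k i j
    refine hIb _ ((hmeas k i).mul (hmeas k j)) 1 ?_
    filter_upwards [hb k] with ω h
    rw [abs_mul]
    nlinarith [h.1 i, h.1 j, abs_nonneg (v k ω i), abs_nonneg (v k ω j)]
  have hI2 : ∀ k i, Integrable (fun ω => s k ω * v k ω i) P := by
    intro k i
    refine hIb _ ((hms k).mul (hmeas k i)) B ?_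
    filter_upwards [hb k] with ω h
    rw [abs_mul]
    nlinarith [h.1 i, h.2, abs_nonneg (s k ω), abs_nonneg (v k ω i)]
  have hI3 : ∀ k l i, Integrable (fun ω => (s k ω * v k ω i) * (s l ω * v l ω i)) P := by
    intro k l i
    refine hIb _ (((hms k).mul (hmeas k i)).mul ((hms l).mul (hmeas l i))) (B*B) ?_
    filter_upwards [hb k, hb l] with ω h h'
    rw [abs_mul, abs_mul, abs_mul]
    have e1 : |s k ω| * |v k ω i| ≤ B := by
      nlinarith [h.1 i, h.2, abs_nonneg (s k ω), abs_nonneg (v k ω i)]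
    have e2 : |s l ω| * |v l ω i| ≤ B := by
      nlinarith [h'.1 i, h'.2, abs_nonneg (s l ω), abs_nonneg (v l ω i)]
    exact mul_le_mul e1 e2 (mul_nonneg (abs_nonneg _) (abs_nonneg _)) hB0
  have hIsq : ∀ k i, Integrable (fun ω => (s k ω * v k ω i)^2) P := by
    intro k i
    simpa [sq] using hI3 k k i
  have hIs2 : ∀ k, Integrable (fun ω => (s k ω)^2) P := by
    intro k
    refine hIb _ ((hms k).pow_const 2) (B^2) ?_
    filter_upwards [hb k] with ω h
    rw [abs_pow]
    exact pow_le_pow_left₀ (abs_nonneg _) h.2 2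
  -- Key1 : first moment
  have key1 : ∀ k i, (∫ ω, s k ω * v k ω i ∂P) = ρ * Δ i := by
    intro k i
    have h : (fun ω => s k ω * v k ω i) = fun ω => ∑ j, Δ j * (v k ω j * v k ω i) := by
      funext ω
      show (∑ j, v k ω j * Δ j) * v k ω i = _
      rw [Finset.sum_mul]
      exact Finset.sum_congr rfl fun j _ => by ring
    rw [h, integral_finset_sum _ (fun j _ => (hI1 k j i).const_mul _)]
    simp only [integral_const_mul, hcov k, Matrix.one_apply, mul_ite, mul_one, mul_zero]
    simp [Finset.sum_ite_eq', mul_comm]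
  -- Key2 : independence cross terms
  have key2 : ∀ k l, k ≠ l → ∀ i,
      (∫ ω, (s k ω * v k ω i) * (s l ω * v l ω i) ∂P) = (ρ * Δ i) * (ρ * Δ i) := by
    intro k l hkl i
    have hφ : Measurable (fun x : EuclideanSpace ℝ (Fin d) => (∑ j, x j * Δ j) * x i) :=
      (Finset.measurable_sum _ fun j _ =>
        ((measurable_pi_apply j).comp (WithLp.measurable_ofLp 2 _)).mul_const _).mul
        ((measurable_pi_apply i).comp (WithLp.measurable_ofLp 2 _))
    have hind : IndepFun (fun ω => s k ω * v k ω i) (fun ω => s l ω * v l ω i) P :=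
      (hindep.indepFun hkl).comp hφ hφ
    have h := IndepFun.integral_mul_eq_mul_integral hind (hI2 k i).aestronglyMeasurable
      (hI2 l i).aestronglyMeasurable
    simp only [Pi.mul_apply] at h
    rw [show (∫ ω, (s k ω * v k ω i) * (s l ω * v l ω i) ∂P)
        = integral P ((fun ω => s k ω * v k ω i) * fun ω => s l ω * v l ω i) from rfl] at *
    rw [h, key1, key1]
  -- Key3 : second moment of s
  have key3 : ∀ k, (∫ ω, (s k ω)^2 ∂P) = ρ * ∑ i, (Δ i)^2 := by
    intro k
    have h : (fun ω => (s k ω)^2) = fun ω => ∑ j, Δ j * (s k ω * v k ω j) := by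
      funext ω
      have : (s k ω)^2 = s k ω * ∑ j, v k ω j * Δ j := by rw [sq]
      rw [this, Finset.mul_sum]
      exact Finset.sum_congr rfl fun j _ => by ring
    rw [h, integral_finset_sum _ (fun j _ => (hI2 k j).const_mul _)]
    simp only [integral_const_mul, key1]
    rw [Finset.mul_sum]
    exact Finset.sum_congr rfl fun j _ => by ring
  -- Key4 : diagonal bound
  have key4 : ∀ k, (∑ i, ∫ ω, (s k ω * v k ω i)^2 ∂P) ≤ ρ * ∑ i, (Δ i)^2 := by
    intro k
    rw [← integral_finset_sum _ (fun i _ => hIsq k i)]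
    have hle : ∀ᵐ ω ∂P, (∑ i, (s k ω * v k ω i)^2) ≤ (s k ω)^2 := by
      filter_upwards [hnorm k] with ω hω
      have h1 : (∑ i, (s k ω * v k ω i)^2) = (s k ω)^2 * ∑ i, (v k ω i)^2 := by
        rw [Finset.mul_sum]
        exact Finset.sum_congr rfl fun i _ => by ring
      have h2 : (∑ i, (v k ω i)^2) ≤ 1 := by
        have h3 := euclid_norm_sq (v k ω)
        nlinarith [norm_nonneg (v k ω)]
      rw [h1]
      nlinarith [sq_nonneg (s k ω)]
    have hISum : Integrable (fun ω => ∑ i, (s k ω * v k ω i)^2) P :=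
      integrable_finset_sum _ (fun i _ => hIsq k i)
    calc (∫ ω, ∑ i, (s k ω * v k ω i)^2 ∂P) ≤ ∫ ω, (s k ω)^2 ∂P :=
          integral_mono_ae hISum (hIs2 k) hle
      _ = ρ * ∑ i, (Δ i)^2 := key3 k
  -- uniform a.e. bound on w
  have hWbd : ∀ᵐ ω ∂P, ∀ i, |w ω i| ≤ |c| *((K:ℝ)*B) + B := by
    filter_upwards [MeasureTheory.ae_all_iff.2 hb] with ω h
    intro i
    have hT : |∑ k, s k ω * v k ω i| ≤ (K:ℝ)*B := by
      calc |∑ k, s k ω * v k ω i| ≤ ∑ k, |s k ω * v k ω i| := Finset.abs_sum_le_sum_abs _ _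
        _ ≤ ∑ _k : Fin K, B := Finset.sum_le_sum fun k _ => by
            rw [abs_mul]
            nlinarith [(h k).1 i, (h k).2, abs_nonneg (s k ω), abs_nonneg (v k ω i)]
        _ = (K:ℝ)*B := by simp [mul_comm]
    have hD : |Δ i| ≤ B :=
      Finset.single_le_sum (f := fun j => |Δ j|) (fun j _ => abs_nonneg _) (Finset.mem_univ i)
    have h0 : w ω i = c * (∑ k, s k ω * v k ω i) - Δ i := rfl
    rw [h0, sub_eq_add_neg]
    refine (abs_add_le _ _).trans ?_
    rw [abs_neg, abs_mul]
    have := mul_le_mul_of_nonneg_left hT (abs_nonneg c)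
    linarith
  have hIw2 : ∀ i, Integrable (fun ω => (w ω i)^2) P := by
    intro i
    refine hIb _ ((hmw i).pow_const 2) ((|c| *((K:ℝ)*B) + B)^2) ?_
    filter_upwards [hWbd] with ω h
    rw [abs_pow]
    exact pow_le_pow_left₀ (abs_nonneg _) (h i) 2
  -- per-coordinate second moment identity
  have hMi : ∀ i, (∫ ω, (w ω i)^2 ∂P)
      = c^2 * ((∑ k, ∫ ω, (s k ω * v k ω i)^2 ∂P) + ((K:ℝ)*((K:ℝ)-1)) * ((ρ*Δ i)*(ρ*Δ i)))
        - 2*c*Δ i*((K:ℝ)*(ρ*Δ i)) + (Δ i)^2 := by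
    intro i
    have hw : (fun ω => (w ω i)^2) = fun ω =>
        c^2 * (∑ k, ∑ l, (s k ω * v k ω i) * (s l ω * v l ω i))
          - 2*c*Δ i*(∑ k, s k ω * v k ω i) + (Δ i)^2 := by
      funext ω
      have hT : (∑ k, s k ω * v k ω i) * (∑ l, s l ω * v l ω i)
          = ∑ k, ∑ l, (s k ω * v k ω i) * (s l ω * v l ω i) := Finset.sum_mul_sum _ _ _ _
      have h0 : w ω i = c * (∑ k, s k ω * v k ω i) - Δ i := rfl
      rw [h0, ← hT]
      ring
    have hIdd : Integrable (fun ω => ∑ k, ∑ l, (s k ω * v k ω i) * (s l ω * v l ω i)) P :=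
      integrable_finset_sum _ fun k _ => integrable_finset_sum _ fun l _ => hI3 k l i
    have hIT : Integrable (fun ω => ∑ k, s k ω * v k ω i) P :=
      integrable_finset_sum _ fun k _ => hI2 k i
    have hA : Integrable (fun ω =>
        c^2 * (∑ k, ∑ l, (s k ω * v k ω i) * (s l ω * v l ω i))
          - 2*c*Δ i*(∑ k, s k ω * v k ω i)) P :=
      (hIdd.const_mul _).sub (hIT.const_mul _)
    rw [show (∫ ω, (w ω i)^2 ∂P) = ∫ ω, (fun ω => (w ω i)^2) ω ∂P from rfl, hw,
      integral_add hA (integrable_const _),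
      integral_sub (hIdd.const_mul (c^2)) (hIT.const_mul (2*c*Δ i)), integral_const_mul,
      integral_const_mul, integral_const,
      integral_finset_sum _ (fun k _ => integrable_finset_sum _ fun l _ => hI3 k l i),
      integral_finset_sum _ (fun k _ => hI2 k i)]
    simp only [key1, measureReal_def, measure_univ, ENNReal.toReal_one, smul_eq_mul, one_mul]
    have hrow : ∀ k : Fin K, (∑ l, ∫ ω, (s k ω * v k ω i) * (s l ω * v l ω i) ∂P)
        = (∫ ω, (s k ω * v k ω i)^2 ∂P) + ((K:ℝ)-1) * ((ρ*Δ i)*(ρ*Δ i)) := by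
      intro k
      rw [← Finset.add_sum_erase _ _ (Finset.mem_univ k)]
      congr 1
      · exact integral_congr_ae (Filter.Eventually.of_forall fun ω => (sq _).symm)
      · rw [Finset.sum_congr rfl
            (fun l hl => key2 k l (Ne.symm (Finset.ne_of_mem_erase hl)) i),
          Finset.sum_const, Finset.card_erase_of_mem (Finset.mem_univ k)]
        simp only [Finset.card_univ, Fintype.card_fin, nsmul_eq_mul]
        rw [Nat.cast_sub hK]
        norm_num
    rw [Finset.sum_congr rfl (fun k _ => integral_finset_sum _ (fun l _ => hI3 k l i)),
      Finset.sum_congr rfl fun k _ => hrow k, Finset.sum_add_distrib,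
      Finset.sum_const, Finset.sum_const]
    simp only [Finset.card_univ, Fintype.card_fin, nsmul_eq_mul]
    ring
  -- total second moment bound
  set SD : ℝ := ∑ i, (Δ i)^2 with hSDdef
  have hSD0 : 0 ≤ SD := Finset.sum_nonneg fun i _ => sq_nonneg _
  have hF2 : (∫ ω, (F ω)^2 ∂P) ≤ c * SD := by
    have h1 : (fun ω => (F ω)^2) = fun ω => ∑ i, (w ω i)^2 := by
      funext ω
      rw [hFnorm ω, Real.sq_sqrt (Finset.sum_nonneg fun i _ => sq_nonneg _)]
    rw [show (∫ ω, (F ω)^2 ∂P) = ∫ ω, (fun ω => (F ω)^2) ω ∂P from rfl, h1,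
      integral_finset_sum _ (fun i _ => hIw2 i),
      Finset.sum_congr rfl fun i _ => hMi i]
    have hT : (∑ i, ∑ k, ∫ ω, (s k ω * v k ω i)^2 ∂P) ≤ (K:ℝ) * (ρ * SD) := by
      rw [Finset.sum_comm]
      calc (∑ k, ∑ i, ∫ ω, (s k ω * v k ω i)^2 ∂P) ≤ ∑ _k : Fin K, ρ * SD :=
            Finset.sum_le_sum fun k _ => key4 k
        _ = (K:ℝ) * (ρ * SD) := by simp [mul_comm]
    have hsplit : (∑ i, (c^2 * ((∑ k, ∫ ω, (s k ω * v k ω i)^2 ∂P)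
          + ((K:ℝ)*((K:ℝ)-1)) * ((ρ*Δ i)*(ρ*Δ i))) - 2*c*Δ i*((K:ℝ)*(ρ*Δ i)) + (Δ i)^2))
        = c^2 * (∑ i, ∑ k, ∫ ω, (s k ω * v k ω i)^2 ∂P)
          + (c^2*((K:ℝ)*((K:ℝ)-1))*ρ^2 - 2*c*(K:ℝ)*ρ + 1) * SD := by
      calc (∑ i, (c^2 * ((∑ k, ∫ ω, (s k ω * v k ω i)^2 ∂P)
              + ((K:ℝ)*((K:ℝ)-1)) * ((ρ*Δ i)*(ρ*Δ i))) - 2*c*Δ i*((K:ℝ)*(ρ*Δ i)) + (Δ i)^2))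
          = ∑ i, (c^2 * (∑ k, ∫ ω, (s k ω * v k ω i)^2 ∂P)
              + (c^2*((K:ℝ)*((K:ℝ)-1))*ρ^2 - 2*c*(K:ℝ)*ρ + 1) * (Δ i)^2) :=
            Finset.sum_congr rfl fun i _ => by ring
        _ = c^2 * (∑ i, ∑ k, ∫ ω, (s k ω * v k ω i)^2 ∂P)
              + (c^2*((K:ℝ)*((K:ℝ)-1))*ρ^2 - 2*c*(K:ℝ)*ρ + 1) * SD := by
            rw [Finset.sum_add_distrib, ← Finset.mul_sum, ← Finset.mul_sum, ← hSDdef]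
    rw [hsplit]
    have e2 : c*((K:ℝ)*ρ) = 1 := by rw [← hc1]; ring
    have e3 : c^2*((K:ℝ)*(ρ*SD)) = c*SD := by
      have h' : c^2*((K:ℝ)*(ρ*SD)) = (c * (c*((K:ℝ)*ρ))) * SD := by ring
      rw [h', e2, mul_one]
    have e4 : c^2*((K:ℝ)^2*ρ^2) = 1 := by
      have h' : c^2*((K:ℝ)^2*ρ^2) = (c*((K:ℝ)*ρ))^2 := by ring
      rw [h', e2, one_pow]
    have e5 : (c^2*((K:ℝ)*((K:ℝ)-1))*ρ^2 - 2*c*(K:ℝ)*ρ + 1) * SD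
        = -(c^2*((K:ℝ)*ρ^2)*SD) := by
      have h6 : c^2*((K:ℝ)*((K:ℝ)-1))*ρ^2 - 2*c*(K:ℝ)*ρ + 1 = -(c^2*((K:ℝ)*ρ^2)) := by
        linear_combination e4 - 2*e2
      rw [h6]
      ring
    have h7 : 0 ≤ c^2*((K:ℝ)*ρ^2)*SD := by positivity
    have h8 := mul_le_mul_of_nonneg_left hT (sq_nonneg c)
    rw [e5]
    linarith [e3, h8]
  -- Cauchy-Schwarz via variance
  have hFm : Measurable F := by
    have hFe : F = fun ω => Real.sqrt (∑ i, (w ω i)^2) := funext hFnorm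
    rw [hFe]
    exact (Finset.measurable_sum _ fun i _ => (hmw i).pow_const 2).sqrt
  have hFLp : MemLp F 2 P := by
    refine MemLp.of_bound hFm.aestronglyMeasurable
      (Real.sqrt (∑ _i : Fin d, (|c| *((K:ℝ)*B) + B)^2)) ?_
    filter_upwards [hWbd] with ω h
    rw [Real.norm_eq_abs, hFnorm ω, abs_of_nonneg (Real.sqrt_nonneg _)]
    apply Real.sqrt_le_sqrt
    refine Finset.sum_le_sum fun i _ => ?_
    rw [← sq_abs]
    exact pow_le_pow_left₀ (abs_nonneg _) (h i) 2
  have hEF : (∫ ω, F ω ∂P) ≤ Real.sqrt c * ‖Δ‖ := by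
    have h1 : (∫ ω, F ω ∂P)^2 ≤ ∫ ω, (F ω)^2 ∂P := by
      have hv := variance_nonneg F P
      rw [variance_eq_sub hFLp] at hv
      have e1 : P[F^2] = ∫ ω, (F ω)^2 ∂P := rfl
      have e2 : P[F] = ∫ ω, F ω ∂P := rfl
      rw [e1, e2] at hv
      linarith
    have h2 : (0:ℝ) ≤ ∫ ω, F ω ∂P := integral_nonneg fun ω => norm_nonneg _
    have h3 : ‖Δ‖^2 = SD := euclid_norm_sq Δ
    have h4 : (∫ ω, F ω ∂P)^2 ≤ c * SD := le_trans h1 hF2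
    calc (∫ ω, F ω ∂P) = Real.sqrt ((∫ ω, F ω ∂P)^2) := (Real.sqrt_sq h2).symm
      _ ≤ Real.sqrt (c * SD) := Real.sqrt_le_sqrt h4
      _ = Real.sqrt c * Real.sqrt SD := Real.sqrt_mul hc0.le _
      _ = Real.sqrt c * ‖Δ‖ := by rw [← h3, Real.sqrt_sq (norm_nonneg _)]
  -- final arithmetic
  have hd1 : (1:ℝ) ≤ (d:ℝ) := by exact_mod_cast hd
  have hL2 : Real.log 2 ≤ Real.log (2*(d:ℝ)) := by
    apply Real.log_le_log (by norm_num)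
    nlinarith
  have hLpos : 0 ≤ Real.log (2*(d:ℝ)) :=
    le_trans (Real.log_nonneg (by norm_num)) hL2
  have h2L : 1 ≤ 2*Real.log (2*(d:ℝ)) := by
    nlinarith [Real.log_two_gt_d9]
  have hsqc : Real.sqrt c ≤ Real.sqrt (2*Real.log (2*(d:ℝ))/(ρ*K)) := by
    apply Real.sqrt_le_sqrt
    rw [div_eq_mul_inv, ← hcdef]
    nlinarith [hc0.le]
  constructor
  · calc (∫ ω, F ω ∂P) ≤ Real.sqrt c * ‖Δ‖ := hEF
      _ ≤ (Real.sqrt (2*Real.log (2*(d:ℝ))/(ρ*K)) + Real.log (2*(d:ℝ))/(ρ*K)) * ‖Δ‖ := by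
          apply mul_le_mul_of_nonneg_right _ (norm_nonneg _)
          have hx : 0 ≤ Real.log (2*(d:ℝ))/(ρ*K) := div_nonneg hLpos hρK.le
          linarith
  · calc (∫ ω, F ω ∂P) ≤ Real.sqrt c * ‖Δ‖ := hEF
      _ ≤ max (2*Real.sqrt (2*Real.log (2*(d:ℝ))/(ρ*K))) (2*Real.log (2*(d:ℝ))/(ρ*K)) * ‖Δ‖ := by
          apply mul_le_mul_of_nonneg_right _ (norm_nonneg _)
          refine le_trans ?_ (le_max_left _ _)
          have := Real.sqrt_nonneg (2*Real.log (2*(d:ℝ))/(ρ*K))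
          linarith
end

section
/- Let ℓ: ℝ^d → ℝ be β-smooth (i.e., its gradient is β-Lipschitz), let w ∈ ℝ^d, ε > 0, and let v₁, …, v_K ∈ ℝ^d satisfy ‖v_k‖ ≤ 1 for all k. Define g_k = (ℓ(w + ε v_k) - ℓ(w))/ε and V = [v₁ … v_K]. Then ‖(1/K) V g - (1/K) V Vᵀ ∇ℓ(w)‖ ≤ (1/2) β ε, where g = (g₁, …, g_K)ᵀ. -/
open scoped RealInnerProductSpace

lemma taylor_half_bound {E : Type*} [NormedAddCommGroup E] [InnerProductSpace ℝ E]
    [CompleteSpace E] (f : E → ℝ) (hf : Differentiable ℝ f) (β : ℝ) (hβ : 0 ≤ β)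
    (hL : ∀ x y, ‖gradient f x - gradient f y‖ ≤ β * ‖x - y‖) (x h : E) :
    |f (x + h) - f x - ⟪gradient f x, h⟫| ≤ β / 2 * ‖h‖ ^ 2 := by
  set φ : ℝ → ℝ := fun t => f (x + t • h) with hφdef
  have hc : ∀ t : ℝ, HasDerivAt (fun s : ℝ => x + s • h) h t := fun t => by
    simpa using ((hasDerivAt_id t).smul_const h).const_add x
  have hφ : ∀ t : ℝ, HasDerivAt φ ⟪gradient f (x + t • h), h⟫ t := by
    intro t
    have := ((hf (x + t • h)).hasGradientAt.hasFDerivAt).comp_hasDerivAt t (hc t)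
    simpa [hφdef, Function.comp_def] using this
  have hgradcont : Continuous fun t : ℝ => gradient f (x + t • h) := by
    have hlip : LipschitzWith β.toNNReal (gradient f) := by
      apply LipschitzWith.of_dist_le_mul
      intro a b
      simpa [dist_eq_norm, Real.coe_toNNReal β hβ] using hL a b
    exact hlip.continuous.comp (by continuity)
  have hcont : Continuous fun t : ℝ => ⟪gradient f (x + t • h), h⟫ :=
    hgradcont.inner continuous_const
  have hint : ∫ t in (0:ℝ)..1, ⟪gradient f (x + t • h), h⟫ = φ 1 - φ 0 := by
    apply intervalIntegral.integral_eq_sub_of_hasDerivAt (fun t _ => hφ t)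
    exact hcont.intervalIntegrable 0 1
  have hφ1 : φ 1 = f (x + h) := by simp [hφdef]
  have hφ0 : φ 0 = f x := by simp [hφdef]
  have hconst : ∫ _t in (0:ℝ)..1, ⟪gradient f x, h⟫ = ⟪gradient f x, h⟫ := by simp
  have hkey : f (x + h) - f x - ⟪gradient f x, h⟫ =
      ∫ t in (0:ℝ)..1, (⟪gradient f (x + t • h), h⟫ - ⟪gradient f x, h⟫) := by
    rw [intervalIntegral.integral_sub (hcont.intervalIntegrable 0 1)
      (intervalIntegrable_const), hint, hconst, hφ1, hφ0]
  rw [hkey]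
  have hb : ∀ t ∈ Set.uIoc (0:ℝ) 1,
      ‖⟪gradient f (x + t • h), h⟫ - ⟪gradient f x, h⟫‖ ≤ β * t * ‖h‖ ^ 2 := by
    intro t ht
    rw [Set.uIoc_of_le zero_le_one] at ht
    have h1 : ⟪gradient f (x + t • h), h⟫ - ⟪gradient f x, h⟫
        = ⟪gradient f (x + t • h) - gradient f x, h⟫ := by
      rw [inner_sub_left]
    rw [h1, Real.norm_eq_abs]
    calc |⟪gradient f (x + t • h) - gradient f x, h⟫|
        ≤ ‖gradient f (x + t • h) - gradient f x‖ * ‖h‖ := abs_real_inner_le_norm _ _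
      _ ≤ (β * ‖(x + t • h) - x‖) * ‖h‖ := by
          gcongr; exact hL _ _
      _ = β * t * ‖h‖ ^ 2 := by
          have : ‖(x + t • h) - x‖ = t * ‖h‖ := by
            simp [norm_smul, abs_of_pos ht.1]
          rw [this]; ring
  have hbd : ∀ᵐ t ∂(MeasureTheory.volume.restrict (Set.uIoc (0:ℝ) 1)),
      ‖⟪gradient f (x + t • h), h⟫ - ⟪gradient f x, h⟫‖ ≤ β * t * ‖h‖ ^ 2 :=
    (MeasureTheory.ae_restrict_iff' measurableSet_uIoc).mpr (Filter.Eventually.of_forall hb)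
  have hmain := intervalIntegral.norm_integral_le_of_norm_le
    (f := fun t => ⟪gradient f (x + t • h), h⟫ - ⟪gradient f x, h⟫) (g := fun t => β * t * ‖h‖ ^ 2) zero_le_one
    ((MeasureTheory.ae_restrict_iff' measurableSet_Ioc).mp (by rwa [Set.uIoc_of_le zero_le_one] at hbd))
    (((continuous_const.mul continuous_id).mul
      continuous_const).intervalIntegrable (0:ℝ) 1)
  rw [Real.norm_eq_abs] at hmain
  refine hmain.trans ?_
  have hval : ∫ t in (0:ℝ)..1, β * t * ‖h‖ ^ 2 = β / 2 * ‖h‖ ^ 2 := by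
    have heq : (fun t : ℝ => β * t * ‖h‖ ^ 2) = fun t : ℝ => (β * ‖h‖ ^ 2) * t := by
      funext t; ring
    rw [heq, intervalIntegral.integral_const_mul, integral_id]
    ring
  rw [hval]

theorem zeroth_order_reconstruction_error (d K : ℕ) (β ε : ℝ) (hβ : 0 ≤ β) (hε : 0 < ε)
    (ℓ : EuclideanSpace ℝ (Fin d) → ℝ) (hdiff : Differentiable ℝ ℓ)
    (hsmooth : ∀ x y, ‖gradient ℓ x - gradient ℓ y‖ ≤ β * ‖x - y‖)
    (w : EuclideanSpace ℝ (Fin d)) (v : Fin K → EuclideanSpace ℝ (Fin d))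
    (hv : ∀ k, ‖v k‖ ≤ 1) (g : Fin K → ℝ)
    (hg : ∀ k, g k = (ℓ (w + ε • v k) - ℓ w) / ε) :
    ‖((K : ℝ)⁻¹ • ∑ k, g k • v k) -
        (K : ℝ)⁻¹ • ∑ k, ⟪v k, gradient ℓ w⟫ • v k‖ ≤ 1 / 2 * β * ε := by
  have coeff : ∀ k, |g k - ⟪v k, gradient ℓ w⟫| ≤ 1 / 2 * β * ε := by
    intro k
    have ht := taylor_half_bound ℓ hdiff β hβ hsmooth w (ε • v k)
    have hin : ⟪gradient ℓ w, ε • v k⟫ = ε * ⟪v k, gradient ℓ w⟫ := by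
      rw [real_inner_smul_right, real_inner_comm]
    have hnorm : ‖ε • v k‖ ^ 2 = ε ^ 2 * ‖v k‖ ^ 2 := by
      rw [norm_smul, Real.norm_eq_abs, abs_of_pos hε]; ring
    have hgk : g k - ⟪v k, gradient ℓ w⟫
        = (ℓ (w + ε • v k) - ℓ w - ⟪gradient ℓ w, ε • v k⟫) / ε := by
      rw [hg k, hin]; field_simp
    rw [hgk, abs_div, abs_of_pos hε, div_le_iff₀ hε]
    calc |ℓ (w + ε • v k) - ℓ w - ⟪gradient ℓ w, ε • v k⟫|
        ≤ β / 2 * ‖ε • v k‖ ^ 2 := ht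
      _ = β / 2 * ε ^ 2 * ‖v k‖ ^ 2 := by rw [hnorm]; ring
      _ ≤ β / 2 * ε ^ 2 * 1 := by
          have hv2 : ‖v k‖ ^ 2 ≤ 1 := by
            calc ‖v k‖ ^ 2 ≤ 1 ^ 2 := by
                  apply pow_le_pow_left₀ (norm_nonneg _) (hv k)
              _ = 1 := one_pow 2
          exact mul_le_mul_of_nonneg_left hv2 (by positivity)
      _ = 1 / 2 * β * ε * ε := by ring
  rcases Nat.eq_zero_or_pos K with hK | hK
  · subst hK
    simp only [Finset.univ_eq_empty, Finset.sum_empty, smul_zero, sub_zero, norm_zero]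
    positivity
  have hKpos : (0:ℝ) < K := Nat.cast_pos.mpr hK
  rw [← smul_sub, ← Finset.sum_sub_distrib]
  have : ∀ k, g k • v k - ⟪v k, gradient ℓ w⟫ • v k = (g k - ⟪v k, gradient ℓ w⟫) • v k := by
    intro k; rw [sub_smul]
  simp_rw [this]
  rw [norm_smul, Real.norm_eq_abs, abs_of_pos (by positivity : (0:ℝ) < (K:ℝ)⁻¹)]
  calc (K:ℝ)⁻¹ * ‖∑ k, (g k - ⟪v k, gradient ℓ w⟫) • v k‖
      ≤ (K:ℝ)⁻¹ * ∑ k, ‖(g k - ⟪v k, gradient ℓ w⟫) • v k‖ := by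
        gcongr; exact norm_sum_le _ _
    _ ≤ (K:ℝ)⁻¹ * ∑ k : Fin K, (1 / 2 * β * ε) := by
        gcongr with k
        rw [norm_smul, Real.norm_eq_abs]
        calc |g k - ⟪v k, gradient ℓ w⟫| * ‖v k‖
            ≤ (1 / 2 * β * ε) * 1 :=
              mul_le_mul (coeff k) (hv k) (norm_nonneg _) (by positivity)
          _ = 1 / 2 * β * ε := mul_one _
    _ = 1 / 2 * β * ε := by
        rw [Finset.sum_const, Finset.card_univ, Fintype.card_fin, nsmul_eq_mul]
        field_simp
end
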